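/- Let p be a prime, let 2 ≤ q ≤ p and let X be a free ℤ_p-space (ℤ_p = ℤ/pℤ). If secat(X → X/ℤ_p) ≥ q, then there is no continuous ℤ_p-equivariant map X → Map_q(ℤ_p, ℝ); that is, ind_q(X,ℤ_p) ≥ 1. -/
import Mathlib


/-- `Map_q(G,Y)`: functions `G → Y` that are non-constant on every `q`-element subset of `G`. -/
def MapQ (G Y : Type*) (q : ℕ) : Set (G → Y) :=
  {φ | ∀ S : Finset G, S.card = q → ¬∃ y : Y, ∀ g ∈ S, φ g = y}

theorem MapQ.smul_mem {G Y : Type*} [Group G] {q : ℕ} (g : G) {φ : G → Y}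
    (hφ : φ ∈ MapQ G Y q) : (fun h => φ (g⁻¹ * h)) ∈ MapQ G Y q := by
  classical
  rintro S hS ⟨y, hy⟩
  refine hφ (S.image (fun h => g⁻¹ * h)) ?_ ⟨y, ?_⟩
  · rwa [Finset.card_image_of_injective _ (mul_right_injective g⁻¹)]
  · rintro a ha
    obtain ⟨b, hb, rfl⟩ := Finset.mem_image.mp ha
    exact hy b hb

/-- The left `G`-action on `Map_q(G,Y)` given by `(g • φ) h = φ (g⁻¹ * h)`. -/
instance MapQ.instSMul {G Y : Type*} [Group G] {q : ℕ} : SMul G (MapQ G Y q) :=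
  ⟨fun g φ => ⟨fun h => (φ : G → Y) (g⁻¹ * h), MapQ.smul_mem g φ.2⟩⟩

instance MapQ.instMulAction {G Y : Type*} [Group G] {q : ℕ} :
    MulAction G (MapQ G Y q) where
  one_smul φ := Subtype.ext <| funext fun h => by
    show (φ : G → Y) ((1 : G)⁻¹ * h) = (φ : G → Y) h
    rw [inv_one, one_mul]
  mul_smul g k φ := Subtype.ext <| funext fun h => by
    show (φ : G → Y) ((g * k)⁻¹ * h) = (φ : G → Y) (k⁻¹ * (g⁻¹ * h))
    rw [mul_inv_rev, mul_assoc]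

/-- The sectional category of a map: the least `n` such that the base admits a cover by `n`
open sets, each admitting a continuous local section; `∞` if no such finite cover exists. -/
noncomputable def secat {E B : Type*} [TopologicalSpace E] [TopologicalSpace B]
    (p : E → B) : ℕ∞ :=
  ⨅ (n : ℕ) (_ : ∃ U : Fin n → Set B, (∀ i, IsOpen (U i)) ∧ (⋃ i, U i) = Set.univ ∧
      ∀ i, ∃ s : C(U i, E), ∀ b : U i, p (s b) = (b : B)), (n : ℕ∞)

/-- The triple `(X,G;Y)` satisfies the `q`-th Borsuk-Ulam property. -/
def BorsukUlam (G : Type*) [Group G] (X Y : Type*) [TopologicalSpace X] [TopologicalSpace Y]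
    [MulAction G X] (q : ℕ) : Prop :=
  ∀ f : C(X, Y), ∃ (x : X) (S : Finset G), S.card = q ∧ ∃ y : Y, ∀ g ∈ S, f (g • x) = y

/-- The `q`-th index of `(X,G)`: the least `k` such that there is a continuous `G`-equivariant
map `X → Map_q(G, ℝ^{k+1})`; `∞` if no such `k` exists. -/
noncomputable def indexQ (G : Type*) [Group G] (X : Type*) [TopologicalSpace X]
    [MulAction G X] (q : ℕ) : ℕ∞ :=
  ⨅ (k : ℕ) (_ : ∃ Φ : C(X, MapQ G (Fin (k + 1) → ℝ) q),
      ∀ (g : G) (x : X), Φ (g • x) = g • Φ x), (k : ℕ∞)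



namespace St9

set_option linter.unusedSectionVars false

open Finset MulAction Topology

variable (p : ℕ) [Fact p.Prime] {X : Type*} [TopologicalSpace X]
  [MulAction (Multiplicative (ZMod p)) X]
  [ContinuousConstSMul (Multiplicative (ZMod p)) X]

local notation "GG" => Multiplicative (ZMod p)

instance : NeZero p := ⟨(Fact.out : p.Prime).ne_zero⟩

lemma cardGG : Fintype.card GG = p := by
  rw [Fintype.card_multiplicative, ZMod.card]

/-- min of `f` over the translates `g • x`, `g ∈ A`. -/
noncomputable def minOn (f : C(X, ℝ)) (A : Finset GG) (x : X) : ℝ :=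
  if h : A.Nonempty then A.inf' h (fun g => f (g • x)) else 0

lemma continuous_minOn (f : C(X, ℝ)) (A : Finset GG) : Continuous (minOn p f A) := by
  unfold minOn
  split
  · exact Continuous.finset_inf'_apply _ fun g _ =>
      f.continuous.comp (continuous_const_smul g)
  · exact continuous_const

lemma minOn_le (f : C(X, ℝ)) {A : Finset GG} {g : GG} (hg : g ∈ A) (x : X) :
    minOn p f A x ≤ f (g • x) := by
  rw [minOn, dif_pos ⟨g, hg⟩]
  exact Finset.inf'_le _ hg

lemma le_minOn (f : C(X, ℝ)) {A : Finset GG} (hA : A.Nonempty) {x : X} {c : ℝ}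
    (h : ∀ g ∈ A, c ≤ f (g • x)) : c ≤ minOn p f A x := by
  rw [minOn, dif_pos hA]
  exact Finset.le_inf' _ _ h

lemma lt_minOn (f : C(X, ℝ)) {A : Finset GG} (hA : A.Nonempty) {x : X} {c : ℝ}
    (h : ∀ g ∈ A, c < f (g • x)) : c < minOn p f A x := by
  rw [minOn, dif_pos hA]
  exact (Finset.lt_inf'_iff _).2 h

lemma minOn_image (f : C(X, ℝ)) (A : Finset GG) (k : GG) (x : X) :
    minOn p f (A.image (· * k)) x = minOn p f A (k • x) := by
  classical
  rcases A.eq_empty_or_nonempty with rfl | hA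
  · simp [minOn]
  · have hA' : (A.image (· * k)).Nonempty := hA.image _
    rw [minOn, dif_pos hA', minOn, dif_pos hA, Finset.inf'_image]
    refine Finset.inf'_congr _ rfl fun g hg => ?_
    simp [Function.comp, mul_smul]

/-- `j`-th largest value of `g ↦ f (g • x)` (as max over `j`-subsets of the min). -/
noncomputable def vlev (f : C(X, ℝ)) (j : ℕ) (x : X) : ℝ :=
  if h : (Finset.powersetCard j (Finset.univ : Finset GG)).Nonempty then
    (Finset.powersetCard j (Finset.univ : Finset GG)).sup' h (fun A => minOn p f A x)
  else 0

lemma continuous_vlev (f : C(X, ℝ)) (j : ℕ) : Continuous (vlev p f j) := by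
  unfold vlev
  split
  · exact Continuous.finset_sup'_apply _ fun A _ => continuous_minOn p f A
  · exact continuous_const

lemma minOn_le_vlev (f : C(X, ℝ)) {j : ℕ} {A : Finset GG} (hA : A.card = j) (x : X) :
    minOn p f A x ≤ vlev p f j x := by
  have hmem : A ∈ Finset.powersetCard j (Finset.univ : Finset GG) :=
    Finset.mem_powersetCard.2 ⟨A.subset_univ, hA⟩
  rw [vlev, dif_pos ⟨A, hmem⟩]
  exact Finset.le_sup' (fun A => minOn p f A x) hmem

lemma vlev_lt (f : C(X, ℝ)) {j : ℕ} (hj : j ≤ Fintype.card GG) {x : X} {c : ℝ}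
    (h : ∀ A : Finset GG, A.card = j → minOn p f A x < c) : vlev p f j x < c := by
  have hne : (Finset.powersetCard j (Finset.univ : Finset GG)).Nonempty :=
    Finset.powersetCard_nonempty.2 (by simpa using hj)
  rw [vlev, dif_pos hne]
  exact (Finset.sup'_lt_iff hne).2 fun A hA =>
    h A (Finset.mem_powersetCard.1 hA).2

lemma exists_vlev_eq (f : C(X, ℝ)) {j : ℕ} (hj : j ≤ Fintype.card GG) (x : X) :
    ∃ A : Finset GG, A.card = j ∧ vlev p f j x = minOn p f A x := by
  have hne : (Finset.powersetCard j (Finset.univ : Finset GG)).Nonempty :=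
    Finset.powersetCard_nonempty.2 (by simpa using hj)
  obtain ⟨A, hA, hval⟩ := Finset.exists_mem_eq_sup' hne (fun A => minOn p f A x)
  exact ⟨A, (Finset.mem_powersetCard.1 hA).2, by rw [vlev, dif_pos hne, hval]⟩

lemma vlev_smul (f : C(X, ℝ)) (j : ℕ) (k : GG) (x : X) :
    vlev p f j (k • x) = vlev p f j x := by
  classical
  have key : ∀ (k : GG) (x : X), vlev p f j (k • x) ≤ vlev p f j x := by
    intro k x
    by_cases h : (Finset.powersetCard j (Finset.univ : Finset GG)).Nonempty
    · rw [vlev, dif_pos h]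
      refine (Finset.sup'_le_iff (f := fun A => minOn p f A (k • x)) h).2 fun A hA => ?_
      have hcard : (A.image (· * k)).card = j := by
        rw [Finset.card_image_of_injective _ (mul_left_injective k)]
        exact (Finset.mem_powersetCard.1 hA).2
      calc minOn p f A (k • x) = minOn p f (A.image (· * k)) x := (minOn_image p f A k x).symm
        _ ≤ vlev p f j x := minOn_le_vlev p f hcard x
    · rw [vlev, dif_neg h, vlev, dif_neg h]
  refine le_antisymm (key k x) ?_
  have := key k⁻¹ (k • x)
  rwa [inv_smul_smul] at this

/-- The set of `g` whose value exceeds the `(j+1)`-st level: the "top `j`" set. -/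
noncomputable def Aset (f : C(X, ℝ)) (j : ℕ) (x : X) : Finset GG := by
  classical exact Finset.univ.filter (fun g => vlev p f (j + 1) x < f (g • x))

lemma mem_Aset {f : C(X, ℝ)} {j : ℕ} {x : X} {g : GG} :
    g ∈ Aset p f j x ↔ vlev p f (j + 1) x < f (g • x) := by
  classical simp [Aset]

lemma card_Aset_le (f : C(X, ℝ)) (j : ℕ) (x : X) : (Aset p f j x).card ≤ j := by
  by_contra hlt
  obtain ⟨B, hBsub, hBcard⟩ := Finset.exists_subset_card_eq
    (show j + 1 ≤ (Aset p f j x).card by omega)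
  have hBne : B.Nonempty := Finset.card_pos.1 (by omega)
  have h1 : vlev p f (j + 1) x < minOn p f B x :=
    lt_minOn p f hBne fun g hg => mem_Aset p |>.1 (hBsub hg)
  have h2 : minOn p f B x ≤ vlev p f (j + 1) x := minOn_le_vlev p f hBcard x
  linarith

lemma Aset_smul (f : C(X, ℝ)) (j : ℕ) (k : GG) (x : X) :
    Aset p f j (k • x) = (Aset p f j x).image (· * k⁻¹) := by
  classical
  ext g
  rw [Finset.mem_image]
  constructor
  · intro hg
    refine ⟨g * k, ?_, by group⟩
    rw [mem_Aset] at hg ⊢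
    rwa [mul_smul, ← vlev_smul p f (j+1) k x]
  · rintro ⟨a, ha, rfl⟩
    rw [mem_Aset] at ha ⊢
    rw [vlev_smul p f (j+1) k x]
    have : (a * k⁻¹) • k • x = a • x := by
      rw [smul_smul]; group
    rwa [this]

/-- The open set where the gap between the `j`-th and `(j+1)`-st levels is positive. -/
def Vset (f : C(X, ℝ)) (j : ℕ) : Set X := {x | vlev p f (j + 1) x < vlev p f j x}

lemma isOpen_Vset (f : C(X, ℝ)) (j : ℕ) : IsOpen (Vset p f j) :=
  isOpen_lt (continuous_vlev p f (j+1)) (continuous_vlev p f j)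

lemma Vset_smul_mem {f : C(X, ℝ)} {j : ℕ} {x : X} (hx : x ∈ Vset p f j) (k : GG) :
    k • x ∈ Vset p f j := by
  simp only [Vset, Set.mem_setOf_eq] at hx ⊢
  rwa [vlev_smul, vlev_smul]

lemma card_Aset (f : C(X, ℝ)) {j : ℕ} (hj1 : 1 ≤ j) (hj : j ≤ Fintype.card GG)
    {x : X} (hx : x ∈ Vset p f j) : (Aset p f j x).card = j := by
  obtain ⟨A, hAcard, hAval⟩ := exists_vlev_eq p f hj x
  have hsub : A ⊆ Aset p f j x := by
    intro g hg
    rw [mem_Aset]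
    calc vlev p f (j+1) x < vlev p f j x := hx
      _ = minOn p f A x := hAval
      _ ≤ f (g • x) := minOn_le p f hg x
  have := Finset.card_le_card hsub
  have := card_Aset_le p f j x
  omega

lemma not_mem_Aset {f : C(X, ℝ)} {j : ℕ} {x : X} {g : GG} (hg : g ∉ Aset p f j x) :
    f (g • x) ≤ vlev p f (j + 1) x := by
  by_contra h
  exact hg (mem_Aset p |>.2 (lt_of_not_ge h))

/-- separation: values on `Aset` strictly dominate values off `Aset`. -/
lemma Aset_sep {f : C(X, ℝ)} {j : ℕ} {x : X} {g h : GG}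
    (hg : g ∈ Aset p f j x) (hh : h ∉ Aset p f j x) : f (h • x) < f (g • x) :=
  lt_of_le_of_lt (not_mem_Aset p hh) (mem_Aset p |>.1 hg)

/-- rigidity: a set of the right size with the separation property is `Aset`. -/
lemma Aset_eq_of_sep (f : C(X, ℝ)) {j : ℕ} (hj1 : 1 ≤ j) (hj : j ≤ Fintype.card GG)
    {x : X} (hx : x ∈ Vset p f j) {A₀ : Finset GG} (hA₀ : A₀.card = j)
    (hsep : ∀ g ∈ A₀, ∀ h ∉ A₀, f (h • x) < f (g • x)) : Aset p f j x = A₀ := by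
  classical
  by_contra hne
  have hcard : (Aset p f j x).card = j := card_Aset p f hj1 hj hx
  have h1 : ¬ A₀ ⊆ Aset p f j x := by
    intro hsub
    exact hne (Finset.eq_of_subset_of_card_le hsub (by omega)).symm
  have h2 : ¬ Aset p f j x ⊆ A₀ := by
    intro hsub
    exact hne (Finset.eq_of_subset_of_card_le hsub (by omega))
  obtain ⟨g, hgA₀, hgA⟩ := Finset.not_subset.1 h1
  obtain ⟨g', hg'A, hg'A₀⟩ := Finset.not_subset.1 h2
  have := Aset_sep p hg'A hgA
  have := hsep g hgA₀ g' hg'A₀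
  linarith

/-- Equivariant "centroid" of a subset of `ℤ/p`. -/
noncomputable def ctr (A : Finset GG) : GG :=
  Multiplicative.ofAdd ((A.card : ZMod p)⁻¹ * ∑ a ∈ A, Multiplicative.toAdd a)

lemma ctr_image {A : Finset GG} (hA : ((A.card : ZMod p)) ≠ 0) (k : GG) :
    ctr p (A.image (· * k)) = ctr p A * k := by
  classical
  have hcard : (A.image (· * k)).card = A.card :=
    Finset.card_image_of_injective _ (mul_left_injective k)
  have hsum : ∑ a ∈ A.image (· * k), Multiplicative.toAdd a
      = (∑ a ∈ A, Multiplicative.toAdd a) + A.card • Multiplicative.toAdd k := by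
    rw [Finset.sum_image (fun x _ y _ h => mul_left_injective k h)]
    simp [Finset.sum_add_distrib]
  rw [ctr, ctr, hcard, hsum]
  have : (A.card : ZMod p)⁻¹ * ((∑ a ∈ A, Multiplicative.toAdd a) +
      A.card • Multiplicative.toAdd k)
      = (A.card : ZMod p)⁻¹ * (∑ a ∈ A, Multiplicative.toAdd a) + Multiplicative.toAdd k := by
    rw [nsmul_eq_mul, mul_add, inv_mul_cancel_left₀ hA]
  rw [this, ofAdd_add]
  congr 1

/-- The local section candidate upstairs. -/
noncomputable def sig (f : C(X, ℝ)) (j : ℕ) (x : X) : X := ctr p (Aset p f j x) • x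

lemma card_Aset_ne_zero (f : C(X, ℝ)) {j : ℕ} (hj1 : 1 ≤ j) (hjp : j < p)
    {x : X} (hx : x ∈ Vset p f j) : (((Aset p f j x).card : ZMod p)) ≠ 0 := by
  have hcard : (Aset p f j x).card = j :=
    card_Aset p f hj1 (by rw [cardGG]; omega) hx
  rw [hcard]
  intro h
  have := (ZMod.natCast_eq_zero_iff j p).1 h
  have := Nat.le_of_dvd (by omega) this
  omega

lemma sig_smul (f : C(X, ℝ)) {j : ℕ} (hj1 : 1 ≤ j) (hjp : j < p)
    {x : X} (hx : x ∈ Vset p f j) (k : GG) : sig p f j (k • x) = sig p f j x := by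
  rw [sig, sig, Aset_smul, ctr_image p (card_Aset_ne_zero p f hj1 hjp hx), smul_smul,
    inv_mul_cancel_right]

lemma mk_sig (f : C(X, ℝ)) (j : ℕ) (x : X) :
    Quotient.mk (MulAction.orbitRel GG X) (sig p f j x)
      = Quotient.mk (MulAction.orbitRel GG X) x :=
  Quotient.sound (MulAction.mem_orbit x _)

lemma continuousOn_sig (f : C(X, ℝ)) {j : ℕ} (hj1 : 1 ≤ j) (hjp : j < p) :
    ContinuousOn (sig p f j) (Vset p f j) := by
  intro x₀ hx₀
  refine ContinuousAt.continuousWithinAt ?_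
  set A₀ := Aset p f j x₀ with hA₀
  set N : Set X := Vset p f j ∩
    ⋂ (g : GG), ⋂ (h : GG), {x | g ∈ A₀ → h ∉ A₀ → f (h • x) < f (g • x)} with hN
  have hNopen : IsOpen N := by
    refine (isOpen_Vset p f j).inter
      (isOpen_iInter_of_finite fun g => isOpen_iInter_of_finite fun h => ?_)
    by_cases hcond : g ∈ A₀ ∧ h ∉ A₀
    · have : {x : X | g ∈ A₀ → h ∉ A₀ → f (h • x) < f (g • x)}
          = {x | f (h • x) < f (g • x)} := by
        ext x; simp [hcond.1, hcond.2]
      rw [this]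
      exact isOpen_lt (f.continuous.comp (continuous_const_smul h))
        (f.continuous.comp (continuous_const_smul g))
    · have : {x : X | g ∈ A₀ → h ∉ A₀ → f (h • x) < f (g • x)} = Set.univ := by
        ext x
        simp only [Set.mem_setOf_eq, Set.mem_univ, iff_true]
        intro h1 h2
        exact absurd ⟨h1, h2⟩ hcond
      rw [this]
      exact isOpen_univ
  have hx₀N : x₀ ∈ N := by
    refine ⟨hx₀, ?_⟩
    simp only [Set.mem_iInter, Set.mem_setOf_eq]
    intro g h hg hh
    exact Aset_sep p hg hh
  have hAeq : ∀ x ∈ N, Aset p f j x = A₀ := by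
    intro x hx
    refine Aset_eq_of_sep p f hj1 (by rw [cardGG]; omega) hx.1
      (card_Aset p f hj1 (by rw [cardGG]; omega) hx₀) ?_
    intro g hg h hh
    have := hx.2
    simp only [Set.mem_iInter, Set.mem_setOf_eq] at this
    exact this g h hg hh
  refine ContinuousAt.congr (continuous_const_smul (ctr p A₀)).continuousAt ?_
  refine Filter.eventuallyEq_of_mem (hNopen.mem_nhds hx₀N) fun x hx => ?_
  rw [sig, hAeq x hx]

lemma preimage_image_of_invariant {V : Set X}
    (hinv : ∀ (k : GG) (x : X), x ∈ V → k • x ∈ V) :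
    (Quotient.mk (MulAction.orbitRel GG X)) ⁻¹'
      (Quotient.mk (MulAction.orbitRel GG X) '' V) = V := by
  ext x
  simp only [Set.mem_preimage, Set.mem_image]
  constructor
  · rintro ⟨y, hyV, hy⟩
    have hrel : y ∈ MulAction.orbit GG x := by
      rw [← MulAction.orbitRel_apply]
      exact Quotient.exact hy
    obtain ⟨g, rfl⟩ := hrel
    have := hinv g⁻¹ (g • x) hyV
    rwa [inv_smul_smul] at this
  · intro hx
    exact ⟨x, hx, rfl⟩

lemma isQuotientMap_mk :
    IsQuotientMap (Quotient.mk (MulAction.orbitRel GG X)) :=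
  isQuotientMap_quot_mk

lemma isOpen_image_of_invariant {V : Set X} (hV : IsOpen V)
    (hinv : ∀ (k : GG) (x : X), x ∈ V → k • x ∈ V) :
    IsOpen (Quotient.mk (MulAction.orbitRel GG X) '' V) := by
  rw [← (isQuotientMap_mk p).isOpen_preimage, preimage_image_of_invariant p hinv]
  exact hV

lemma exists_level (f : C(X, ℝ)) {q : ℕ} (hq2 : 2 ≤ q) (hqp : q ≤ p)
    (hf : ∀ (x : X) (S : Finset GG), S.card = q → ¬∃ y : ℝ, ∀ g ∈ S, f (g • x) = y)
    (x : X) : ∃ j : ℕ, 1 ≤ j ∧ j ≤ q - 1 ∧ x ∈ Vset p f j := by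
  classical
  haveI : Nonempty GG := ⟨1⟩
  obtain ⟨g₀, -, hg₀⟩ := Finset.exists_max_image Finset.univ (fun g => f (g • x))
    (Finset.univ_nonempty (α := GG))
  set T : Finset GG := Finset.univ.filter (fun g => f (g₀ • x) ≤ f (g • x)) with hT
  have hg₀T : g₀ ∈ T := Finset.mem_filter.2 ⟨Finset.mem_univ _, le_rfl⟩
  have hTval : ∀ g ∈ T, f (g • x) = f (g₀ • x) := fun g hg =>
    le_antisymm (hg₀ g (Finset.mem_univ g)) ((Finset.mem_filter.1 hg).2)
  set t := T.card with htdef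
  have ht1 : 1 ≤ t := Finset.card_pos.2 ⟨g₀, hg₀T⟩
  have htq : t ≤ q - 1 := by
    by_contra hcon
    obtain ⟨S, hSsub, hScard⟩ := Finset.exists_subset_card_eq
      (show q ≤ T.card by omega)
    exact hf x S hScard ⟨f (g₀ • x), fun g hg => hTval g (hSsub hg)⟩
  refine ⟨t, ht1, htq, ?_⟩
  have hub : f (g₀ • x) ≤ vlev p f t x := by
    calc f (g₀ • x) ≤ minOn p f T x :=
          le_minOn p f ⟨g₀, hg₀T⟩ (fun g hg => (Finset.mem_filter.1 hg).2)
      _ ≤ vlev p f t x := minOn_le_vlev p f rfl x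
  have hlt : vlev p f (t + 1) x < f (g₀ • x) := by
    refine vlev_lt p f (by rw [cardGG]; omega) ?_
    intro A hAcard
    have hex : ∃ g ∈ A, g ∉ T := by
      by_contra hno
      push_neg at hno
      have hsub : A ⊆ T := fun g hg => hno g hg
      have := Finset.card_le_card hsub
      omega
    obtain ⟨g, hgA, hgT⟩ := hex
    have hglt : f (g • x) < f (g₀ • x) := by
      have : ¬ f (g₀ • x) ≤ f (g • x) := by
        simpa [hT, Finset.mem_filter] using hgT
      exact lt_of_not_ge this
    exact lt_of_le_of_lt (minOn_le p f hgA x) hglt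
  show vlev p f (t + 1) x < vlev p f t x
  exact lt_of_lt_of_le hlt hub

lemma exists_cover (f : C(X, ℝ)) {q : ℕ} (hq2 : 2 ≤ q) (hqp : q ≤ p)
    (hf : ∀ (x : X) (S : Finset GG), S.card = q → ¬∃ y : ℝ, ∀ g ∈ S, f (g • x) = y) :
    ∃ U : Fin (q - 1) → Set (Quotient (MulAction.orbitRel GG X)),
      (∀ i, IsOpen (U i)) ∧ (⋃ i, U i) = Set.univ ∧
      ∀ i, ∃ s : C(U i, X), ∀ b : U i,
        Quotient.mk (MulAction.orbitRel GG X) (s b) = (b : Quotient (MulAction.orbitRel GG X)) := by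
  classical
  set π : X → Quotient (MulAction.orbitRel GG X) := Quotient.mk (MulAction.orbitRel GG X)
    with hπ
  refine ⟨fun i => π '' Vset p f ((i : ℕ) + 1), fun i => ?_, ?_, fun i => ?_⟩
  · exact isOpen_image_of_invariant p (isOpen_Vset p f _)
      (fun k x hx => Vset_smul_mem p hx k)
  · rw [Set.eq_univ_iff_forall]
    intro b
    obtain ⟨x, rfl⟩ := Quot.exists_rep b
    obtain ⟨j, hj1, hjq, hxj⟩ := exists_level p f hq2 hqp hf x
    have hiq : j - 1 < q - 1 := by omega
    refine Set.mem_iUnion.2 ⟨⟨j - 1, hiq⟩, ⟨x, ?_, rfl⟩⟩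
    have hval : ((⟨j - 1, hiq⟩ : Fin (q - 1)) : ℕ) + 1 = j := by simp; omega
    rw [hval]
    exact hxj
  · -- the local section over `π '' Vset p f (i+1)`
    set j : ℕ := (i : ℕ) + 1 with hjdef
    have hj1 : 1 ≤ j := by omega
    have hjp : j < p := by have := i.isLt; omega
    set V := Vset p f j with hV
    have hmem : ∀ b : (π '' V : Set _), ∃ x, x ∈ V ∧ π x = (b : _) := fun b => b.2
    set F : (π '' V : Set _) → X := fun b => sig p f j (hmem b).choose with hF
    have hchoose : ∀ b, (hmem b).choose ∈ V ∧ π ((hmem b).choose) = (b : _) :=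
      fun b => (hmem b).choose_spec
    have hindep : ∀ x y : X, x ∈ V → y ∈ V → π x = π y →
        sig p f j x = sig p f j y := by
      intro x y hx hy hxy
      have horb : x ∈ MulAction.orbit GG y := by
        rw [← MulAction.orbitRel_apply]
        exact Quotient.exact hxy
      obtain ⟨g, rfl⟩ := horb
      exact sig_smul p f hj1 hjp hy g
    have hcont : Continuous F := by
      rw [continuous_def]
      intro O hO
      set P := V ∩ sig p f j ⁻¹' O with hP
      have hPopen : IsOpen P :=
        (continuousOn_sig p f hj1 hjp).isOpen_inter_preimage (isOpen_Vset p f j) hO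
      have hPinv : ∀ (k : GG) (x : X), x ∈ P → k • x ∈ P := by
        intro k x hx
        refine ⟨Vset_smul_mem p hx.1 k, ?_⟩
        rw [Set.mem_preimage, sig_smul p f hj1 hjp hx.1]
        exact hx.2
      have heq : F ⁻¹' O = Subtype.val ⁻¹' (π '' P) := by
        ext b
        simp only [Set.mem_preimage, Set.mem_image]
        constructor
        · intro hFb
          exact ⟨(hmem b).choose, ⟨(hchoose b).1, hFb⟩, (hchoose b).2⟩
        · rintro ⟨y, ⟨hyV, hyO⟩, hyπ⟩
          have heq2 : sig p f j ((hmem b).choose) = sig p f j y :=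
            hindep _ y (hchoose b).1 hyV (by rw [(hchoose b).2, hyπ])
          show sig p f j ((hmem b).choose) ∈ O
          rw [heq2]
          exact hyO
      rw [heq]
      exact (isOpen_image_of_invariant p hPopen hPinv).preimage continuous_subtype_val
    refine ⟨⟨F, hcont⟩, fun b => ?_⟩
    show π (sig p f j ((hmem b).choose)) = (b : _)
    exact (mk_sig p f j _).trans (hchoose b).2

end St9


/-- If `secat(X → X/ℤ_p) ≥ q` then there is no continuous `ℤ_p`-equivariant map
`X → Map_q(ℤ_p, ℝ)`; that is, `ind_q(X,ℤ_p) ≥ 1`. -/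

theorem statement_9 (p : ℕ) (hp : p.Prime) {q : ℕ} (hq2 : 2 ≤ q) (hqp : q ≤ p)
    {X : Type*} [TopologicalSpace X] [MulAction (Multiplicative (ZMod p)) X]
    [ContinuousConstSMul (Multiplicative (ZMod p)) X]
    (hfree : ∀ (g : Multiplicative (ZMod p)) (x : X), g • x = x → g = 1)
    (hsecat : (q : ℕ∞) ≤ secat (Quotient.mk (MulAction.orbitRel (Multiplicative (ZMod p)) X))) :
    (¬ ∃ Φ : C(X, MapQ (Multiplicative (ZMod p)) ℝ q),
        ∀ (g : Multiplicative (ZMod p)) (x : X), Φ (g • x) = g • Φ x) ∧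
    1 ≤ indexQ (Multiplicative (ZMod p)) X q := by
  haveI : Fact p.Prime := ⟨hp⟩
  have hmain : ¬ ∃ Φ : C(X, MapQ (Multiplicative (ZMod p)) ℝ q),
      ∀ (g : Multiplicative (ZMod p)) (x : X), Φ (g • x) = g • Φ x := by
    rintro ⟨Φ, hΦ⟩
    set f : C(X, ℝ) :=
      ⟨fun x => (Φ x : Multiplicative (ZMod p) → ℝ) 1,
        (continuous_apply (1 : Multiplicative (ZMod p))).comp
          (continuous_subtype_val.comp Φ.continuous)⟩ with hfdef
    have hfval : ∀ (g : Multiplicative (ZMod p)) (x : X),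
        f (g • x) = (Φ x : Multiplicative (ZMod p) → ℝ) g⁻¹ := by
      intro g x
      show (Φ (g • x) : Multiplicative (ZMod p) → ℝ) 1
        = (Φ x : Multiplicative (ZMod p) → ℝ) g⁻¹
      rw [hΦ g x]
      show (Φ x : Multiplicative (ZMod p) → ℝ) (g⁻¹ * 1)
        = (Φ x : Multiplicative (ZMod p) → ℝ) g⁻¹
      rw [mul_one]
    have hf : ∀ (x : X) (S : Finset (Multiplicative (ZMod p))), S.card = q →
        ¬∃ y : ℝ, ∀ g ∈ S, f (g • x) = y := by
      classical
      rintro x S hS ⟨y, hy⟩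
      refine (Φ x).2 (S.image (·⁻¹)) ?_ ⟨y, ?_⟩
      · rwa [Finset.card_image_of_injective _ inv_injective]
      · rintro a ha
        obtain ⟨g, hg, rfl⟩ := Finset.mem_image.1 ha
        rw [← hfval g x]
        exact hy g hg
    obtain ⟨U, hopen, hcover, hsec⟩ := St9.exists_cover p f hq2 hqp hf
    have hle : secat (Quotient.mk (MulAction.orbitRel (Multiplicative (ZMod p)) X))
        ≤ ((q - 1 : ℕ) : ℕ∞) := by
      refine iInf_le_of_le (q - 1) (iInf_le_of_le ⟨U, hopen, hcover, hsec⟩ le_rfl)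
    have : (q : ℕ∞) ≤ ((q - 1 : ℕ) : ℕ∞) := le_trans hsecat hle
    have hqle : q ≤ q - 1 := by exact_mod_cast this
    omega
  refine ⟨hmain, ?_⟩
  refine le_iInf fun k => le_iInf fun hk => ?_
  rcases Nat.eq_zero_or_pos k with rfl | hkpos
  · exfalso
    obtain ⟨Φ, hΦ⟩ := hk
    refine hmain ⟨⟨fun x => ⟨fun g => (Φ x : Multiplicative (ZMod p) → Fin 1 → ℝ) g 0, ?_⟩, ?_⟩,
      fun g x => ?_⟩
    · rintro S hS ⟨y, hy⟩
      refine (Φ x).2 S hS ⟨fun _ => y, fun g hg => funext fun i => ?_⟩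
      have hi : i = 0 := Fin.fin_one_eq_zero i
      rw [hi]
      exact hy g hg
    · exact Continuous.subtype_mk (continuous_pi fun g =>
        (continuous_apply (0 : Fin 1)).comp
          ((continuous_apply g).comp (continuous_subtype_val.comp Φ.continuous))) _
    · refine Subtype.ext (funext fun h => ?_)
      show (Φ (g • x) : Multiplicative (ZMod p) → Fin 1 → ℝ) h 0 = _
      rw [hΦ g x]
      rfl
  · exact le_trans (by exact_mod_cast hkpos : (1 : ℕ∞) ≤ (k : ℕ∞)) le_rfl
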